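/- Lemma 2(2): For any bipartite pure state |φ⟩ with Schmidt decomposition |φ⟩ = Σ_{i=0}^{d-1} √μᵢ |i_A i_B⟩, d = min(d_A, d_B), one has ‖M_{α,β}^l(|φ⟩⟨φ|)‖_tr ≤ √((lα²+1)(lβ²+1)) + (d−1). -/

import Mathlib

open Matrix
open scoped Kronecker ComplexOrder

/-- Column-stacking vectorization: `vec A (j, i) = A i j`. -/
def vec {m n : Type*} (A : Matrix m n ℂ) : n × m → ℂ := fun p => A p.2 p.1

/-- The realignment map across the bipartition `A | B`. -/
def realign {A B : Type*} (ρ : Matrix (A × B) (A × B) ℂ) :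
    Matrix (A × A) (B × B) ℂ :=
  Matrix.of fun r c => ρ (r.2, c.2) (r.1, c.1)

/-- Partial trace over the first tensor factor. -/
noncomputable def ptrA {A B : Type*} [Fintype A] (ρ : Matrix (A × B) (A × B) ℂ) :
    Matrix B B ℂ :=
  Matrix.of fun i j => ∑ k, ρ (k, i) (k, j)

/-- Partial trace over the second tensor factor. -/
noncomputable def ptrB {A B : Type*} [Fintype B] (ρ : Matrix (A × B) (A × B) ℂ) :
    Matrix A A ℂ :=
  Matrix.of fun i j => ∑ k, ρ (i, k) (j, k)

/-- The positive semidefinite square root of a positive semidefinite matrix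
(`Matrix.PosSemidef.sqrt` of the older Mathlib, removed since). -/
noncomputable def posSemidefSqrt {n : Type*} [Fintype n] [DecidableEq n] {A : Matrix n n ℂ}
    (hA : A.PosSemidef) : Matrix n n ℂ :=
  hA.1.eigenvectorUnitary.1 * diagonal ((↑) ∘ (√·) ∘ hA.1.eigenvalues) *
  (star hA.1.eigenvectorUnitary : Matrix n n ℂ)

/-- The trace norm `‖A‖_tr = tr √(Aᴴ A)`, i.e. the sum of singular values. -/
noncomputable def traceNorm {m n : Type*} [Fintype m] [Fintype n] [DecidableEq n]
    (A : Matrix m n ℂ) : ℝ :=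
  ((posSemidefSqrt (Matrix.posSemidef_conjTranspose_mul_self A)).trace).re

/-- The matrix `M_{α,β}^l(ρ) = [[αβ E_{l×l}, α ω_l(tr_A ρ)ᵀ],
[β ω_l(tr_B ρ), R(ρ)]]`. -/
noncomputable def Mblock (α β : ℝ) (l : ℕ) {A B : Type*} [Fintype A] [Fintype B]
    (ρ : Matrix (A × B) (A × B) ℂ) :
    Matrix (Fin l ⊕ A × A) (Fin l ⊕ B × B) ℂ :=
  Matrix.fromBlocks
    (Matrix.of fun _ _ => ((α * β : ℝ) : ℂ))
    (Matrix.of fun _ c => (α : ℂ) * _root_.vec (ptrA ρ) c)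
    (Matrix.of fun r _ => (β : ℂ) * _root_.vec (ptrB ρ) r)
    (realign ρ)

lemma traceNorm_eq_sum_sqrt {m n : Type*} [Fintype m] [Fintype n] [DecidableEq n]
    (A : Matrix m n ℂ) :
    traceNorm A = ∑ j, Real.sqrt ((Matrix.posSemidef_conjTranspose_mul_self A).1.eigenvalues j) := by
  set hH := Matrix.posSemidef_conjTranspose_mul_self A with hHdef
  show ((posSemidefSqrt hH).trace).re = _
  rw [posSemidefSqrt, Matrix.trace_mul_cycle, hH.1.eigenvectorUnitary.2.1, one_mul,
    Matrix.trace_diagonal]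
  simp [Complex.ofReal_re]

lemma dot_eigenvectorBasis {n : Type*} [Fintype n] [DecidableEq n] {H : Matrix n n ℂ}
    (hH : H.IsHermitian) (j k : n) :
    star ⇑(hH.eigenvectorBasis j) ⬝ᵥ ⇑(hH.eigenvectorBasis k) = if j = k then 1 else 0 := by
  have h := orthonormal_iff_ite.mp hH.eigenvectorBasis.orthonormal j k
  rw [EuclideanSpace.inner_eq_star_dotProduct] at h
  rw [dotProduct_comm]
  simpa [WithLp.equiv] using h

lemma mulVec_eigvec {n : Type*} [Fintype n] [DecidableEq n] {H : Matrix n n ℂ}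
    (hH : H.IsHermitian) (j : n) :
    H *ᵥ ⇑(hH.eigenvectorBasis j) = (hH.eigenvalues j : ℂ) • ⇑(hH.eigenvectorBasis j) := by
  funext i
  have := congrFun (hH.mulVec_eigenvectorBasis j) i
  simpa [Complex.real_smul] using this

section dotHelpers
variable {ι m : Type*} [Fintype ι] [Fintype m]

lemma dotProduct_sum' (w : m → ℂ) (f : ι → m → ℂ) :
    w ⬝ᵥ (∑ j, f j) = ∑ j, w ⬝ᵥ f j := by
  simp only [dotProduct, Finset.sum_apply, Finset.mul_sum]
  exact Finset.sum_comm

lemma sum_dotProduct' (w : m → ℂ) (f : ι → m → ℂ) :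
    (∑ j, f j) ⬝ᵥ w = ∑ j, f j ⬝ᵥ w := by
  simp only [dotProduct, Finset.sum_apply, Finset.sum_mul]
  exact Finset.sum_comm

lemma star_dot_self (a : m → ℂ) :
    star a ⬝ᵥ a = ((∑ r, Complex.normSq (a r) : ℝ) : ℂ) := by
  simp [dotProduct, Complex.normSq_eq_conj_mul_self]

lemma star_dot_self_re_nonneg (a : m → ℂ) : 0 ≤ (star a ⬝ᵥ a).re := by
  rw [star_dot_self]
  simpa using Finset.sum_nonneg fun r _ => Complex.normSq_nonneg (a r)

lemma bessel (z : ι → m → ℂ)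
    (horth : ∀ j k, j ≠ k → star (z j) ⬝ᵥ z k = 0)
    (hnorm : ∀ j, (star (z j) ⬝ᵥ z j).re ≤ 1)
    (x : m → ℂ) :
    ∑ j, Complex.normSq (star (z j) ⬝ᵥ x) ≤ (star x ⬝ᵥ x).re := by
  classical
  set c : ι → ℂ := fun j => star (z j) ⬝ᵥ x with hc
  set v : m → ℂ := x - ∑ j, c j • z j with hv
  have hstarv : star v = star x - ∑ j, (starRingEnd ℂ (c j)) • star (z j) := by
    rw [hv, star_sub, star_sum]
    congr 1
    refine Finset.sum_congr rfl fun j _ => ?_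
    rw [star_smul]
    rfl
  have hxz : ∀ j, star x ⬝ᵥ z j = starRingEnd ℂ (c j) := by
    intro j
    rw [hc]
    rw [star_dotProduct]
    rfl
  have t1 : star x ⬝ᵥ (∑ j, c j • z j) = ∑ j, (Complex.normSq (c j) : ℂ) := by
    rw [dotProduct_sum']
    refine Finset.sum_congr rfl fun j _ => ?_
    rw [dotProduct_smul, hxz j, smul_eq_mul, Complex.normSq_eq_conj_mul_self, mul_comm]
  have t2 : (∑ j, (starRingEnd ℂ (c j)) • star (z j)) ⬝ᵥ x = ∑ j, (Complex.normSq (c j) : ℂ) := by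
    rw [sum_dotProduct']
    refine Finset.sum_congr rfl fun j _ => ?_
    rw [smul_dotProduct, smul_eq_mul, Complex.normSq_eq_conj_mul_self]
  have t3 : (∑ j, (starRingEnd ℂ (c j)) • star (z j)) ⬝ᵥ (∑ k, c k • z k)
      = ∑ j, (Complex.normSq (c j) : ℂ) * (star (z j) ⬝ᵥ z j) := by
    rw [sum_dotProduct']
    refine Finset.sum_congr rfl fun j _ => ?_
    rw [smul_dotProduct, dotProduct_sum']
    rw [Finset.sum_eq_single j]
    · rw [dotProduct_smul, smul_eq_mul, smul_eq_mul, Complex.normSq_eq_conj_mul_self]; ring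
    · intro k _ hk
      rw [dotProduct_smul, horth j k (Ne.symm hk), smul_zero]
    · intro h; exact absurd (Finset.mem_univ j) h
  have expand : star v ⬝ᵥ v = star x ⬝ᵥ x - ∑ j, (Complex.normSq (c j) : ℂ)
      - ∑ j, (Complex.normSq (c j) : ℂ)
      + ∑ j, (Complex.normSq (c j) : ℂ) * (star (z j) ⬝ᵥ z j) := by
    rw [hstarv]
    rw [sub_dotProduct, dotProduct_sub, dotProduct_sub, t1, t2, t3]
    ring
  have hre : 0 ≤ (star x ⬝ᵥ x).re - ∑ j, Complex.normSq (c j)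
      - ∑ j, Complex.normSq (c j)
      + ∑ j, Complex.normSq (c j) * (star (z j) ⬝ᵥ z j).re := by
    have h0 := star_dot_self_re_nonneg v
    rw [expand] at h0
    simpa [Complex.add_re, Complex.sub_re, Complex.re_sum, Complex.mul_re] using h0
  have hle : ∑ j, Complex.normSq (c j) * (star (z j) ⬝ᵥ z j).re ≤ ∑ j, Complex.normSq (c j) :=
    Finset.sum_le_sum fun j _ => by
      nlinarith [Complex.normSq_nonneg (c j), hnorm j]
  have := le_trans (by linarith [hle] : (0:ℝ) ≤ (star x ⬝ᵥ x).re - ∑ j, Complex.normSq (c j)) le_rfl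
  linarith [hre, hle]

end dotHelpers

theorem traceNorm_le_sum_rankOne {m n ι : Type*} [Fintype m] [Fintype n] [Fintype ι]
    [DecidableEq n]
    (c : ι → ℝ) (hc : ∀ i, 0 ≤ c i) (x : ι → m → ℂ) (y : ι → n → ℂ)
    (A : Matrix m n ℂ) (hA : ∀ r s, A r s = ∑ i, (c i : ℂ) * x i r * starRingEnd ℂ (y i s)) :
    traceNorm A ≤ ∑ i, c i * (Real.sqrt (∑ r, Complex.normSq (x i r)) *
      Real.sqrt (∑ s, Complex.normSq (y i s))) := by
  classical
  set hH := Matrix.posSemidef_conjTranspose_mul_self A with hHdef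
  set lam : n → ℝ := hH.1.eigenvalues with hlam
  have hlam0 : ∀ j, 0 ≤ lam j := fun j => hH.eigenvalues_nonneg j
  set w : n → n → ℂ := fun j => ⇑(hH.1.eigenvectorBasis j) with hwdef
  have hw : ∀ j k, star (w j) ⬝ᵥ w k = if j = k then 1 else 0 :=
    fun j k => dot_eigenvectorBasis hH.1 j k
  have hAwdot : ∀ j k, star (A *ᵥ w j) ⬝ᵥ (A *ᵥ w k)
      = (lam k : ℂ) * (if j = k then 1 else 0) := by
    intro j k
    rw [star_mulVec, ← Matrix.dotProduct_mulVec, Matrix.mulVec_mulVec,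
      mulVec_eigvec hH.1 k, dotProduct_smul, smul_eq_mul, hw j k]
  have hAwdot_self : ∀ j, star (A *ᵥ w j) ⬝ᵥ (A *ᵥ w j) = (lam j : ℂ) := by
    intro j
    rw [hAwdot j j, if_pos rfl, mul_one]
  set z : n → m → ℂ := fun j => (((Real.sqrt (lam j) : ℝ) : ℂ))⁻¹ • (A *ᵥ w j) with hzdef
  have hstarz : ∀ j, star (z j) = (((Real.sqrt (lam j) : ℝ) : ℂ))⁻¹ • star (A *ᵥ w j) := by
    intro j
    rw [hzdef]
    rw [star_smul]
    congr 1
    simp [Complex.star_def, map_inv₀, Complex.conj_ofReal]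
  have hzdot : ∀ j k, star (z j) ⬝ᵥ z k
      = (((Real.sqrt (lam j) : ℝ) : ℂ))⁻¹ * ((((Real.sqrt (lam k) : ℝ) : ℂ))⁻¹ *
        ((lam k : ℂ) * (if j = k then 1 else 0))) := by
    intro j k
    rw [hstarz, hzdef, smul_dotProduct, dotProduct_smul, hAwdot j k,
      smul_eq_mul, smul_eq_mul]
  have hzorth : ∀ j k, j ≠ k → star (z j) ⬝ᵥ z k = 0 := by
    intro j k hjk
    rw [hzdot j k, if_neg hjk, mul_zero, mul_zero, mul_zero]
  have hznorm : ∀ j, (star (z j) ⬝ᵥ z j).re ≤ 1 := by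
    intro j
    rw [hzdot j j, if_pos rfl, mul_one]
    rcases eq_or_lt_of_le (hlam0 j) with h | h
    · simp [← h]
    · have hs : Real.sqrt (lam j) ≠ 0 := by positivity
      have h1 : Real.sqrt (lam j) * Real.sqrt (lam j) = lam j := Real.mul_self_sqrt (hlam0 j)
      have : ((((Real.sqrt (lam j) : ℝ) : ℂ))⁻¹ * ((((Real.sqrt (lam j) : ℝ) : ℂ))⁻¹ *
          (lam j : ℂ))) = ((1 : ℝ) : ℂ) := by
        rw [← h1]
        push_cast
        field_simp
        rw [Real.sqrt_sq (Real.sqrt_nonneg _)]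
      rw [this, Complex.ofReal_re]
  have hsqrt_eq : ∀ j, Real.sqrt (lam j) = (star (z j) ⬝ᵥ (A *ᵥ w j)).re := by
    intro j
    have h2 : star (z j) ⬝ᵥ (A *ᵥ w j)
        = (((Real.sqrt (lam j) : ℝ) : ℂ))⁻¹ * (lam j : ℂ) := by
      rw [hstarz, smul_dotProduct, hAwdot_self j, smul_eq_mul]
    rw [h2, ← Complex.ofReal_inv, ← Complex.ofReal_mul, Complex.ofReal_re]
    rcases eq_or_lt_of_le (hlam0 j) with h | h
    · simp [← h]
    · have hs : Real.sqrt (lam j) ≠ 0 := by positivity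
      rw [eq_comm, inv_mul_eq_iff_eq_mul₀ hs, Real.mul_self_sqrt (hlam0 j)]
  have hAw : ∀ j, A *ᵥ w j = fun r => ∑ i, (c i : ℂ) * (star (y i) ⬝ᵥ w j) * x i r := by
    intro j
    funext r
    simp only [Matrix.mulVec, dotProduct, hA, Finset.sum_mul, Pi.star_apply,
      Complex.star_def]
    rw [Finset.sum_comm]
    refine Finset.sum_congr rfl fun i _ => ?_
    simp only [Finset.mul_sum, Finset.sum_mul]
    refine Finset.sum_congr rfl fun s _ => ?_
    ring
  have hdotAw : ∀ j, star (z j) ⬝ᵥ (A *ᵥ w j)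
      = ∑ i, (c i : ℂ) * (star (y i) ⬝ᵥ w j) * (star (z j) ⬝ᵥ x i) := by
    intro j
    rw [hAw j]
    simp only [dotProduct, Pi.star_apply, Finset.mul_sum, Finset.sum_mul, Complex.star_def]
    rw [Finset.sum_comm]
    refine Finset.sum_congr rfl fun i _ => ?_
    refine Finset.sum_congr rfl fun r _ => ?_
    refine Finset.sum_congr rfl fun s _ => ?_
    ring
  -- main chain
  rw [traceNorm_eq_sum_sqrt A]
  have step1 : ∀ j, Real.sqrt (lam j)
      ≤ ∑ i, c i * (‖star (z j) ⬝ᵥ x i‖ * ‖star (y i) ⬝ᵥ w j‖) := by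
    intro j
    rw [hsqrt_eq j, hdotAw j]
    calc (∑ i, (c i : ℂ) * (star (y i) ⬝ᵥ w j) * (star (z j) ⬝ᵥ x i)).re
        ≤ ‖∑ i, (c i : ℂ) * (star (y i) ⬝ᵥ w j) * (star (z j) ⬝ᵥ x i)‖ :=
          Complex.re_le_norm _
      _ ≤ ∑ i, ‖(c i : ℂ) * (star (y i) ⬝ᵥ w j) * (star (z j) ⬝ᵥ x i)‖ := by
          exact norm_sum_le _ _
      _ = ∑ i, c i * (‖star (z j) ⬝ᵥ x i‖ * ‖star (y i) ⬝ᵥ w j‖) := by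
          refine Finset.sum_congr rfl fun i _ => ?_
          rw [norm_mul, norm_mul, Complex.norm_of_nonneg (hc i)]
          ring
  calc ∑ j, Real.sqrt (lam j)
      ≤ ∑ j, ∑ i, c i * (‖star (z j) ⬝ᵥ x i‖ * ‖star (y i) ⬝ᵥ w j‖) :=
        Finset.sum_le_sum fun j _ => step1 j
    _ = ∑ i, c i * ∑ j, ‖star (z j) ⬝ᵥ x i‖ * ‖star (y i) ⬝ᵥ w j‖ := by
        rw [Finset.sum_comm]
        exact Finset.sum_congr rfl fun i _ => by rw [Finset.mul_sum]
    _ ≤ ∑ i, c i * (Real.sqrt (∑ r, Complex.normSq (x i r)) *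
        Real.sqrt (∑ s, Complex.normSq (y i s))) := by
        refine Finset.sum_le_sum fun i _ => ?_
        have h1 : ∑ j, ‖star (z j) ⬝ᵥ x i‖ * ‖star (y i) ⬝ᵥ w j‖
            ≤ Real.sqrt (∑ j, (‖star (z j) ⬝ᵥ x i‖)^2) *
              Real.sqrt (∑ j, (‖star (y i) ⬝ᵥ w j‖)^2) :=
          Real.sum_mul_le_sqrt_mul_sqrt _ _ _
        have h2 : ∑ j, (‖star (z j) ⬝ᵥ x i‖)^2 ≤ ∑ r, Complex.normSq (x i r) := by
          have hb := bessel z hzorth hznorm (x i)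
          rw [star_dot_self, Complex.ofReal_re] at hb
          simpa [Complex.sq_norm] using hb
        have horthw : ∀ j k, j ≠ k → star (w j) ⬝ᵥ w k = 0 := by
          intro j k hjk; rw [hw j k, if_neg hjk]
        have hnormw : ∀ j, (star (w j) ⬝ᵥ w j).re ≤ 1 := by
          intro j; rw [hw j j, if_pos rfl]; norm_num
        have h3 : ∑ j, (‖star (y i) ⬝ᵥ w j‖)^2 ≤ ∑ s, Complex.normSq (y i s) := by
          have hb := bessel w horthw hnormw (y i)
          rw [star_dot_self, Complex.ofReal_re] at hb
          calc ∑ j, (‖star (y i) ⬝ᵥ w j‖)^2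
              = ∑ j, Complex.normSq (star (w j) ⬝ᵥ y i) := by
                refine Finset.sum_congr rfl fun j _ => ?_
                rw [Complex.sq_norm, Matrix.star_dotProduct]
                exact (Complex.normSq_conj _)
            _ ≤ _ := hb
        have hx0 : 0 ≤ ∑ j, (‖star (z j) ⬝ᵥ x i‖)^2 :=
          Finset.sum_nonneg fun j _ => sq_nonneg _
        have hy0 : 0 ≤ ∑ j, (‖star (y i) ⬝ᵥ w j‖)^2 :=
          Finset.sum_nonneg fun j _ => sq_nonneg _
        refine mul_le_mul_of_nonneg_left (h1.trans ?_) (hc i)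
        exact mul_le_mul (Real.sqrt_le_sqrt h2) (Real.sqrt_le_sqrt h3)
          (Real.sqrt_nonneg _) (Real.sqrt_nonneg _)

/-- Lemma 2(2): for a pure state in Schmidt form `|φ⟩ = ∑ᵢ √μᵢ |i_A i_B⟩`,
`‖M_{α,β}^l(|φ⟩⟨φ|)‖_tr ≤ √((lα²+1)(lβ²+1)) + (d − 1)`. -/
theorem traceNorm_Mblock_pure_le' {dA dB d : ℕ} (hd : d = min dA dB)
    (μ : Fin d → ℝ) (hμ : ∀ i, 0 ≤ μ i) (hsum : ∑ i, μ i = 1)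
    (u : Fin d → Fin dA → ℂ) (v : Fin d → Fin dB → ℂ)
    (hu : ∀ k k', ∑ i, starRingEnd ℂ (u k i) * u k' i = if k = k' then 1 else 0)
    (hv : ∀ k k', ∑ i, starRingEnd ℂ (v k i) * v k' i = if k = k' then 1 else 0)
    (φ : Fin dA × Fin dB → ℂ)
    (hφ : φ = fun x => ∑ k, (Real.sqrt (μ k) : ℂ) * u k x.1 * v k x.2)
    (α β : ℝ) (l : ℕ) :
    traceNorm (Mblock α β l (Matrix.vecMulVec φ (star φ))) ≤
      Real.sqrt ((l * α ^ 2 + 1) * (l * β ^ 2 + 1)) + ((d : ℝ) - 1) := by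
  classical
  have hUo : ∀ m0 n0, ∑ k, u m0 k * starRingEnd ℂ (u n0 k) = if m0 = n0 then (1:ℂ) else 0 := by
    intro m0 n0
    have h := congrArg (starRingEnd ℂ) (hu m0 n0)
    rw [map_sum] at h
    simp only [_root_.map_mul, Complex.conj_conj, apply_ite (starRingEnd ℂ), _root_.map_one,
      map_zero] at h
    exact h
  have key1 : ∀ i j : Fin dB, (∑ k, φ (k, i) * starRingEnd ℂ (φ (k, j)))
      = ∑ m0, ((μ m0 : ℝ) : ℂ) * v m0 i * starRingEnd ℂ (v m0 j) := by
    intro i j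
    rw [hφ]
    simp only [map_sum, _root_.map_mul, Complex.conj_ofReal, Finset.sum_mul, Finset.mul_sum]
    rw [Finset.sum_comm]
    calc ∑ n0 : Fin d, ∑ k : Fin dA, ∑ m0 : Fin d,
          (Real.sqrt (μ m0) : ℂ) * u m0 k * v m0 i *
            ((Real.sqrt (μ n0) : ℂ) * starRingEnd ℂ (u n0 k) * starRingEnd ℂ (v n0 j))
        = ∑ n0 : Fin d, ∑ m0 : Fin d,
            ((Real.sqrt (μ m0) : ℂ) * (Real.sqrt (μ n0) : ℂ) * v m0 i * starRingEnd ℂ (v n0 j)) *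
              (∑ k, u m0 k * starRingEnd ℂ (u n0 k)) := by
          refine Finset.sum_congr rfl fun n0 _ => ?_
          rw [Finset.sum_comm]
          refine Finset.sum_congr rfl fun m0 _ => ?_
          rw [Finset.mul_sum]
          refine Finset.sum_congr rfl fun k _ => ?_
          ring
      _ = ∑ n0 : Fin d, ((μ n0 : ℝ) : ℂ) * v n0 i * starRingEnd ℂ (v n0 j) := by
          refine Finset.sum_congr rfl fun n0 _ => ?_
          simp only [hUo, mul_ite, mul_one, mul_zero]
          rw [Finset.sum_ite_eq' Finset.univ n0
            (fun m0 => (Real.sqrt (μ m0) : ℂ) * (Real.sqrt (μ n0) : ℂ) * v m0 i *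
              starRingEnd ℂ (v n0 j)), if_pos (Finset.mem_univ n0)]
          rw [show ((Real.sqrt (μ n0) : ℂ) * (Real.sqrt (μ n0) : ℂ) * v n0 i *
              starRingEnd ℂ (v n0 j)) = (((Real.sqrt (μ n0) * Real.sqrt (μ n0) : ℝ)) : ℂ) *
              v n0 i * starRingEnd ℂ (v n0 j) by push_cast; ring,
            Real.mul_self_sqrt (hμ n0)]
  have hVo : ∀ m0 n0, ∑ k, v m0 k * starRingEnd ℂ (v n0 k) = if m0 = n0 then (1:ℂ) else 0 := by
    intro m0 n0
    have h := congrArg (starRingEnd ℂ) (hv m0 n0)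
    rw [map_sum] at h
    simp only [_root_.map_mul, Complex.conj_conj, apply_ite (starRingEnd ℂ), _root_.map_one,
      map_zero] at h
    exact h
  have key2 : ∀ i j : Fin dA, (∑ k, φ (i, k) * starRingEnd ℂ (φ (j, k)))
      = ∑ m0, ((μ m0 : ℝ) : ℂ) * u m0 i * starRingEnd ℂ (u m0 j) := by
    intro i j
    rw [hφ]
    simp only [map_sum, _root_.map_mul, Complex.conj_ofReal, Finset.sum_mul, Finset.mul_sum]
    rw [Finset.sum_comm]
    calc ∑ n0 : Fin d, ∑ k : Fin dB, ∑ m0 : Fin d,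
          (Real.sqrt (μ m0) : ℂ) * u m0 i * v m0 k *
            ((Real.sqrt (μ n0) : ℂ) * starRingEnd ℂ (u n0 j) * starRingEnd ℂ (v n0 k))
        = ∑ n0 : Fin d, ∑ m0 : Fin d,
            ((Real.sqrt (μ m0) : ℂ) * (Real.sqrt (μ n0) : ℂ) * u m0 i * starRingEnd ℂ (u n0 j)) *
              (∑ k, v m0 k * starRingEnd ℂ (v n0 k)) := by
          refine Finset.sum_congr rfl fun n0 _ => ?_
          rw [Finset.sum_comm]
          refine Finset.sum_congr rfl fun m0 _ => ?_
          rw [Finset.mul_sum]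
          refine Finset.sum_congr rfl fun k _ => ?_
          ring
      _ = ∑ n0 : Fin d, ((μ n0 : ℝ) : ℂ) * u n0 i * starRingEnd ℂ (u n0 j) := by
          refine Finset.sum_congr rfl fun n0 _ => ?_
          simp only [hVo, mul_ite, mul_one, mul_zero]
          rw [Finset.sum_ite_eq' Finset.univ n0
            (fun m0 => (Real.sqrt (μ m0) : ℂ) * (Real.sqrt (μ n0) : ℂ) * u m0 i *
              starRingEnd ℂ (u n0 j)), if_pos (Finset.mem_univ n0)]
          rw [show ((Real.sqrt (μ n0) : ℂ) * (Real.sqrt (μ n0) : ℂ) * u n0 i *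
              starRingEnd ℂ (u n0 j)) = (((Real.sqrt (μ n0) * Real.sqrt (μ n0) : ℝ)) : ℂ) *
              u n0 i * starRingEnd ℂ (u n0 j) by push_cast; ring,
            Real.mul_self_sqrt (hμ n0)]
  set ρ : Matrix (Fin dA × Fin dB) (Fin dA × Fin dB) ℂ := Matrix.vecMulVec φ (star φ) with hρ
  set cc : Fin d × Fin d → ℝ := fun p => Real.sqrt (μ p.1) * Real.sqrt (μ p.2) with hcc
  set xx : Fin d × Fin d → (Fin l ⊕ Fin dA × Fin dA) → ℂ := fun p =>
    Sum.elim (fun _ => if p.1 = p.2 then (α:ℂ) else 0)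
      (fun r => starRingEnd ℂ (u p.2 r.1) * u p.1 r.2) with hxx
  set yy : Fin d × Fin d → (Fin l ⊕ Fin dB × Fin dB) → ℂ := fun p =>
    Sum.elim (fun _ => if p.1 = p.2 then (β:ℂ) else 0)
      (fun s => v p.2 s.1 * starRingEnd ℂ (v p.1 s.2)) with hyy
  have hρapp : ∀ a b, ρ a b = φ a * starRingEnd ℂ (φ b) := by
    intro a b
    rw [hρ, Matrix.vecMulVec_apply, Pi.star_apply]
    rfl
  have hAeq : ∀ r s, Mblock α β l ρ r s = ∑ p, (cc p : ℂ) * xx p r * starRingEnd ℂ (yy p s) := by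
    intro r s
    rcases r with a | r <;> rcases s with b | s
    · -- (inl, inl)
      simp only [Mblock, Matrix.fromBlocks_apply₁₁, Matrix.of_apply, hxx, hyy, hcc,
        Sum.elim_inl]
      rw [Fintype.sum_prod_type]
      have hterm : ∀ m0 n0 : Fin d, (((Real.sqrt (μ m0) * Real.sqrt (μ n0) : ℝ)) : ℂ) *
          (if m0 = n0 then (α:ℂ) else 0) * starRingEnd ℂ (if m0 = n0 then (β:ℂ) else 0)
          = if m0 = n0 then ((μ m0 * (α * β) : ℝ) : ℂ) else 0 := by
        intro m0 n0
        split_ifs with h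
        · subst h
          rw [Complex.conj_ofReal]
          rw [show ((μ m0 * (α * β) : ℝ) : ℂ) = (((Real.sqrt (μ m0) * Real.sqrt (μ m0)) * (α * β) : ℝ) : ℂ) by
            rw [Real.mul_self_sqrt (hμ m0)]]
          push_cast
          ring
        · rw [map_zero, mul_zero]
      simp only [hterm]
      rw [show (∑ m0 : Fin d, ∑ n0 : Fin d,
          if m0 = n0 then ((μ m0 * (α * β) : ℝ) : ℂ) else 0)
          = ∑ m0 : Fin d, ((μ m0 * (α * β) : ℝ) : ℂ) from
        Finset.sum_congr rfl fun m0 _ => by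
          rw [Finset.sum_ite_eq Finset.univ m0 (fun _ => ((μ m0 * (α * β) : ℝ) : ℂ)),
            if_pos (Finset.mem_univ m0)]]
      rw [← Complex.ofReal_sum, ← Finset.sum_mul, hsum, one_mul]
    · -- (inl, inr)
      simp only [Mblock, Matrix.fromBlocks_apply₁₂, Matrix.of_apply, hxx, hyy, hcc,
        Sum.elim_inl, Sum.elim_inr, _root_.vec, ptrA]
      simp only [Matrix.of_apply, hρapp]
      rw [key1 s.2 s.1]
      rw [Fintype.sum_prod_type]
      have hterm : ∀ m0 n0 : Fin d, (((Real.sqrt (μ m0) * Real.sqrt (μ n0) : ℝ)) : ℂ) *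
          (if m0 = n0 then (α:ℂ) else 0) * starRingEnd ℂ (v n0 s.1 * starRingEnd ℂ (v m0 s.2))
          = if m0 = n0 then ((μ m0 : ℝ) : ℂ) * (α:ℂ) * starRingEnd ℂ (v m0 s.1) * v m0 s.2 else 0 := by
        intro m0 n0
        split_ifs with h
        · subst h
          rw [_root_.map_mul, Complex.conj_conj]
          rw [show ((μ m0 : ℝ) : ℂ) = (((Real.sqrt (μ m0) * Real.sqrt (μ m0)) : ℝ) : ℂ) by
            rw [Real.mul_self_sqrt (hμ m0)]]
          push_cast
          ring
        · rw [mul_zero, zero_mul]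
      simp only [hterm]
      rw [show (∑ m0 : Fin d, ∑ n0 : Fin d,
          if m0 = n0 then ((μ m0 : ℝ) : ℂ) * (α:ℂ) * starRingEnd ℂ (v m0 s.1) * v m0 s.2 else 0)
          = ∑ m0 : Fin d, ((μ m0 : ℝ) : ℂ) * (α:ℂ) * starRingEnd ℂ (v m0 s.1) * v m0 s.2 from
        Finset.sum_congr rfl fun m0 _ => by
          rw [Finset.sum_ite_eq Finset.univ m0
            (fun _ => ((μ m0 : ℝ) : ℂ) * (α:ℂ) * starRingEnd ℂ (v m0 s.1) * v m0 s.2),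
            if_pos (Finset.mem_univ m0)]]
      rw [Finset.mul_sum]
      refine Finset.sum_congr rfl fun m0 _ => ?_
      ring
    · -- (inr, inl)
      simp only [Mblock, Matrix.fromBlocks_apply₂₁, Matrix.of_apply, hxx, hyy, hcc,
        Sum.elim_inl, Sum.elim_inr, _root_.vec, ptrB]
      simp only [Matrix.of_apply, hρapp]
      rw [key2 r.2 r.1]
      rw [Fintype.sum_prod_type]
      have hterm : ∀ m0 n0 : Fin d, (((Real.sqrt (μ m0) * Real.sqrt (μ n0) : ℝ)) : ℂ) *
          (starRingEnd ℂ (u n0 r.1) * u m0 r.2) * starRingEnd ℂ (if m0 = n0 then (β:ℂ) else 0)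
          = if m0 = n0 then ((μ m0 : ℝ) : ℂ) * (β:ℂ) * u m0 r.2 * starRingEnd ℂ (u m0 r.1) else 0 := by
        intro m0 n0
        split_ifs with h
        · subst h
          rw [Complex.conj_ofReal]
          rw [show ((μ m0 : ℝ) : ℂ) = (((Real.sqrt (μ m0) * Real.sqrt (μ m0)) : ℝ) : ℂ) by
            rw [Real.mul_self_sqrt (hμ m0)]]
          push_cast
          ring
        · rw [map_zero, mul_zero]
      simp only [hterm]
      rw [show (∑ m0 : Fin d, ∑ n0 : Fin d,
          if m0 = n0 then ((μ m0 : ℝ) : ℂ) * (β:ℂ) * u m0 r.2 * starRingEnd ℂ (u m0 r.1) else 0)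
          = ∑ m0 : Fin d, ((μ m0 : ℝ) : ℂ) * (β:ℂ) * u m0 r.2 * starRingEnd ℂ (u m0 r.1) from
        Finset.sum_congr rfl fun m0 _ => by
          rw [Finset.sum_ite_eq Finset.univ m0
            (fun _ => ((μ m0 : ℝ) : ℂ) * (β:ℂ) * u m0 r.2 * starRingEnd ℂ (u m0 r.1)),
            if_pos (Finset.mem_univ m0)]]
      rw [Finset.mul_sum]
      refine Finset.sum_congr rfl fun m0 _ => ?_
      ring
    · -- (inr, inr)
      simp only [Mblock, Matrix.fromBlocks_apply₂₂, Matrix.of_apply, realign]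
      simp only [Matrix.of_apply, hρapp]
      rw [hφ]
      simp only [hxx, hyy, hcc, Sum.elim_inr]
      rw [map_sum, Finset.sum_mul_sum]
      rw [Fintype.sum_prod_type]
      refine Finset.sum_congr rfl fun m0 _ => Finset.sum_congr rfl fun n0 _ => ?_
      simp only [_root_.map_mul, Complex.conj_ofReal, Complex.conj_conj]
      push_cast
      ring
  have hun : ∀ k, ∑ i, Complex.normSq (u k i) = 1 := by
    intro k
    have h2 : ((∑ i, Complex.normSq (u k i) : ℝ) : ℂ) = 1 := by
      rw [Complex.ofReal_sum]
      rw [show (∑ i, ((Complex.normSq (u k i) : ℝ) : ℂ)) = ∑ i, starRingEnd ℂ (u k i) * u k i from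
        Finset.sum_congr rfl fun i _ => Complex.normSq_eq_conj_mul_self]
      rw [hu k k, if_pos rfl]
    exact_mod_cast h2
  have hvn : ∀ k, ∑ i, Complex.normSq (v k i) = 1 := by
    intro k
    have h2 : ((∑ i, Complex.normSq (v k i) : ℝ) : ℂ) = 1 := by
      rw [Complex.ofReal_sum]
      rw [show (∑ i, ((Complex.normSq (v k i) : ℝ) : ℂ)) = ∑ i, starRingEnd ℂ (v k i) * v k i from
        Finset.sum_congr rfl fun i _ => Complex.normSq_eq_conj_mul_self]
      rw [hv k k, if_pos rfl]
    exact_mod_cast h2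
  have hxnorm : ∀ p : Fin d × Fin d, ∑ r, Complex.normSq (xx p r)
      = if p.1 = p.2 then (l:ℝ)*α^2+1 else 1 := by
    intro p
    rw [hxx]
    rw [Fintype.sum_sum_type]
    simp only [Sum.elim_inl, Sum.elim_inr, Complex.normSq_mul, Complex.normSq_conj]
    have h2 : (∑ r : Fin dA × Fin dA, Complex.normSq (u p.2 r.1) * Complex.normSq (u p.1 r.2)) = 1 := by
      rw [Fintype.sum_prod_type]
      rw [show (∑ r1 : Fin dA, ∑ r2 : Fin dA, Complex.normSq (u p.2 r1) * Complex.normSq (u p.1 r2))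
          = (∑ r1 : Fin dA, Complex.normSq (u p.2 r1)) * (∑ r2 : Fin dA, Complex.normSq (u p.1 r2)) by
        rw [Finset.sum_mul_sum], hun p.1, hun p.2, mul_one]
    rw [h2]
    split_ifs
    · rw [Finset.sum_const, Finset.card_univ, Fintype.card_fin, nsmul_eq_mul,
        Complex.normSq_ofReal]
      ring
    · simp
  have hynorm : ∀ p : Fin d × Fin d, ∑ s, Complex.normSq (yy p s)
      = if p.1 = p.2 then (l:ℝ)*β^2+1 else 1 := by
    intro p
    rw [hyy]
    rw [Fintype.sum_sum_type]
    simp only [Sum.elim_inl, Sum.elim_inr, Complex.normSq_mul, Complex.normSq_conj]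
    have h2 : (∑ s : Fin dB × Fin dB, Complex.normSq (v p.2 s.1) * Complex.normSq (v p.1 s.2)) = 1 := by
      rw [Fintype.sum_prod_type]
      rw [show (∑ s1 : Fin dB, ∑ s2 : Fin dB, Complex.normSq (v p.2 s1) * Complex.normSq (v p.1 s2))
          = (∑ s1 : Fin dB, Complex.normSq (v p.2 s1)) * (∑ s2 : Fin dB, Complex.normSq (v p.1 s2)) by
        rw [Finset.sum_mul_sum], hvn p.1, hvn p.2, mul_one]
    rw [h2]
    split_ifs
    · rw [Finset.sum_const, Finset.card_univ, Fintype.card_fin, nsmul_eq_mul,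
        Complex.normSq_ofReal]
      ring
    · simp
  refine (traceNorm_le_sum_rankOne cc
    (fun p => mul_nonneg (Real.sqrt_nonneg _) (Real.sqrt_nonneg _)) xx yy _ hAeq).trans ?_
  set S : ℝ := Real.sqrt ((l:ℝ)*α^2+1) * Real.sqrt ((l:ℝ)*β^2+1) with hS
  have hα1 : (0:ℝ) ≤ (l:ℝ)*α^2+1 := by positivity
  have hβ1 : (0:ℝ) ≤ (l:ℝ)*β^2+1 := by positivity
  have hterm : ∀ p : Fin d × Fin d, cc p * (Real.sqrt (∑ r, Complex.normSq (xx p r)) *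
      Real.sqrt (∑ s, Complex.normSq (yy p s)))
      = Real.sqrt (μ p.1) * Real.sqrt (μ p.2) + (if p.1 = p.2 then μ p.1 * S - μ p.1 else 0) := by
    intro p
    rw [hxnorm p, hynorm p]
    simp only [hcc]
    split_ifs with h
    · have hμeq : Real.sqrt (μ p.1) * Real.sqrt (μ p.2) = μ p.1 := by
        rw [← h, Real.mul_self_sqrt (hμ p.1)]
      rw [hμeq, hS]
      ring
    · rw [Real.sqrt_one, mul_one, mul_one, add_zero]
  rw [show (∑ p : Fin d × Fin d, cc p * (Real.sqrt (∑ r, Complex.normSq (xx p r)) *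
      Real.sqrt (∑ s, Complex.normSq (yy p s))))
      = ∑ p : Fin d × Fin d, (Real.sqrt (μ p.1) * Real.sqrt (μ p.2) +
        (if p.1 = p.2 then μ p.1 * S - μ p.1 else 0)) from
    Finset.sum_congr rfl fun p _ => hterm p]
  rw [Finset.sum_add_distrib]
  have e1 : ∑ p : Fin d × Fin d, Real.sqrt (μ p.1) * Real.sqrt (μ p.2)
      = (∑ m0, Real.sqrt (μ m0))^2 := by
    rw [Fintype.sum_prod_type, pow_two, Finset.sum_mul_sum]
  have e2 : ∑ p : Fin d × Fin d, (if p.1 = p.2 then μ p.1 * S - μ p.1 else 0) = S - 1 := by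
    rw [Fintype.sum_prod_type]
    rw [show (∑ m0 : Fin d, ∑ n0 : Fin d, if m0 = n0 then μ m0 * S - μ m0 else 0)
        = ∑ m0 : Fin d, (μ m0 * S - μ m0) from
      Finset.sum_congr rfl fun m0 _ => by
        rw [Finset.sum_ite_eq Finset.univ m0 (fun _ => μ m0 * S - μ m0),
          if_pos (Finset.mem_univ m0)]]
    rw [Finset.sum_sub_distrib, ← Finset.sum_mul, hsum, one_mul]
  rw [e1, e2]
  have hCS : (∑ m0, Real.sqrt (μ m0))^2 ≤ (d:ℝ) := by
    have h := Finset.sum_mul_sq_le_sq_mul_sq Finset.univ (fun _ : Fin d => (1:ℝ))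
      (fun m0 => Real.sqrt (μ m0))
    simp only [one_mul, one_pow] at h
    rw [Finset.sum_const, Finset.card_univ, Fintype.card_fin, nsmul_eq_mul, mul_one] at h
    have h2 : ∑ m0, (Real.sqrt (μ m0))^2 = 1 := by
      rw [show (∑ m0, (Real.sqrt (μ m0))^2) = ∑ m0, μ m0 from
        Finset.sum_congr rfl fun m0 _ => Real.sq_sqrt (hμ m0), hsum]
    rw [h2, mul_one] at h
    exact h
  have hSeq : S = Real.sqrt (((l:ℝ)*α^2+1) * ((l:ℝ)*β^2+1)) := by
    rw [hS, Real.sqrt_mul hα1]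
  push_cast
  rw [← hSeq]
  linarith
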